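/- Let a1, b1 > 0, 0 < c < 1, 0 < k < 1, 0 < x⋆ < 1, and set â2 = (1−c)/c, č2 = k·(1−c), and ă2 = (k·(1−x⋆) − k·(c−x⋆)·(1 + a1/(1+b1·x⋆)))/(x⋆·(1 + a1/(1+b1·x⋆))). If x⋆ > (a1 − â2)/(b1·â2) then č2 < ă2, and if x⋆ < (a1 − â2)/(b1·â2) then č2 > ă2. -/

import Mathlib

theorem stmt_12 (a1 b1 c k x : ℝ)
    (ha1 : 0 < a1) (hb1 : 0 < b1)
    (hc : 0 < c) (hc1 : c < 1) (hk : 0 < k) (hk1 : k < 1)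
    (hx : 0 < x) (hx1 : x < 1) :
    (x > (a1 - (1 - c) / c) / (b1 * ((1 - c) / c)) →
      k * (1 - c) <
        (k * (1 - x) - k * (c - x) * (1 + a1 / (1 + b1 * x))) /
          (x * (1 + a1 / (1 + b1 * x)))) ∧
    (x < (a1 - (1 - c) / c) / (b1 * ((1 - c) / c)) →
      k * (1 - c) >
        (k * (1 - x) - k * (c - x) * (1 + a1 / (1 + b1 * x))) /
          (x * (1 + a1 / (1 + b1 * x)))) := by
  have h1c : 0 < 1 - c := by linarith
  have hbx : (0:ℝ) < 1 + b1 * x := by positivity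
  have hA : 0 < 1 + a1 / (1 + b1 * x) := by positivity
  have hden : 0 < x * (1 + a1 / (1 + b1 * x)) := by positivity
  have hslope : 0 < b1 * (1 - c) := by positivity
  have heq : (a1 - (1 - c) / c) / (b1 * ((1 - c) / c)) =
      (a1 * c - (1 - c)) / (b1 * (1 - c)) := by
    field_simp
  constructor
  · intro h
    rw [gt_iff_lt, heq, div_lt_iff₀ hslope] at h
    have hkey : a1 * c < (1 - c) * (1 + b1 * x) := by nlinarith
    rw [lt_div_iff₀ hden]
    field_simp
    nlinarith [mul_pos (mul_pos hk (sub_pos.mpr hx1)) (sub_pos.mpr hkey), mul_pos (sub_pos.mpr hx1) (sub_pos.mpr hkey)]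
  · intro h
    rw [heq, lt_div_iff₀ hslope] at h
    have hkey : (1 - c) * (1 + b1 * x) < a1 * c := by nlinarith
    rw [gt_iff_lt, div_lt_iff₀ hden]
    field_simp
    nlinarith [mul_pos (mul_pos hk (sub_pos.mpr hx1)) (sub_pos.mpr hkey), mul_pos (sub_pos.mpr hx1) (sub_pos.mpr hkey)]
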